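/- In the W(2n|n)-module of Clifford-valued polynomials, with X = (i/√2)γ^k∂_k, one has for all a,s,t with 2a+s+t=m: ad(X)([η^a x^s ∂^t; i_1,…,i_m]) = (i/√2)[η^a x^{s-1} γ ∂^t; i_1,…,i_m], where ad(X)(w) is the supercommutator of X with w in W(2n|n), and the bracket symbols are the symmetrized sums of monomials defined over index distributions. -/

import Mathlib

/-- The product `η^{i_1 i_2} η^{i_3 i_4} ⋯` of η-entries over consecutive pairs of a list
of indices. -/
def etaPairs {n : ℕ} (η : Matrix (Fin n) (Fin n) ℂ) : List (Fin n) → ℂ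
  | i :: j :: rest => η i j * etaPairs η rest
  | _ => 1

/-- The symmetrized bracket symbol `[η^a x^r γ^s ∂^t ; i_1,…,i_m]` of the paper:
`(1/(2^a a! r! t!)) Σ_{σ ∈ S_m}` of the product of `a` η-factors, `r` x-factors,
`s` γ-factors and `t` ∂-factors, with the indices `i_{σ(1)},…,i_{σ(m)}` distributed
in order. -/
noncomputable def wcBracket {A : Type*} [Ring A] [Algebra ℂ A] {n : ℕ}
    (x d γ : Fin n → A) (η : Matrix (Fin n) (Fin n) ℂ)
    (m a r s t : ℕ) (idx : Fin m → Fin n) : A :=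
  ((1 : ℂ) / (2 ^ a * a.factorial * r.factorial * t.factorial)) •
    ∑ σ : Equiv.Perm (Fin m),
      (etaPairs η (((List.finRange m).map (fun p => idx (σ p))).take (2 * a))) •
        (((((List.finRange m).map (fun p => idx (σ p))).drop (2 * a)).take r).map x).prod *
        (((((List.finRange m).map (fun p => idx (σ p))).drop (2 * a + r)).take s).map γ).prod *
        (((((List.finRange m).map (fun p => idx (σ p))).drop (2 * a + r + s)).take t).map d).prod

section wcAux

variable {A : Type*} [Ring A] {n : ℕ}

lemma wc_comm_prod (x : Fin n → A) (c : A) (h : ∀ i, c * x i = x i * c) :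
    ∀ L : List (Fin n), c * (L.map x).prod = (L.map x).prod * c := by
  intro L
  induction L with
  | nil => simp
  | cons j L ih =>
    simp only [List.map_cons, List.prod_cons, ← mul_assoc, h j]
    rw [mul_assoc, ih, mul_assoc]

lemma wc_erase_prod (x : Fin n → A) (hxx : ∀ i j, x i * x j = x j * x i) :
    ∀ (P : List (Fin n)) (l : ℕ) (hl : l < P.length),
      ((P.eraseIdx l).map x).prod * x (P[l]) = (P.map x).prod := by
  intro P
  induction P with
  | nil => intro l hl; simp at hl
  | cons p rest ih =>
    intro l hl
    match l with
    | 0 => simpa using (wc_comm_prod x (x p) (fun i => hxx p i) rest).symm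
    | Nat.succ l =>
        simp only [List.eraseIdx_cons_succ, List.map_cons, List.prod_cons,
          List.getElem_cons_succ, mul_assoc]
        rw [ih l (by simpa using hl)]

lemma wc_dcomm (x d : Fin n → A)
    (hdx : ∀ i j, d i * x j - x j * d i = if i = j then 1 else 0) (k : Fin n) :
    ∀ P : List (Fin n),
      d k * (P.map x).prod - (P.map x).prod * d k
        = ∑ l : Fin P.length, if k = P.get l then ((P.eraseIdx l).map x).prod else 0 := by
  intro P
  induction P with
  | nil => simp
  | cons p rest ih =>
    have h1 : d k * ((p :: rest).map x).prod - ((p :: rest).map x).prod * d k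
        = (d k * x p - x p * d k) * (rest.map x).prod
          + x p * (d k * (rest.map x).prod - (rest.map x).prod * d k) := by
      simp only [List.map_cons, List.prod_cons]
      noncomm_ring
    rw [h1, hdx, ih]
    simp only [List.length_cons]
    rw [Fin.sum_univ_succ]
    simp only [List.get_eq_getElem, List.getElem_cons_zero, List.eraseIdx_cons_zero,
      Fin.val_succ, List.eraseIdx_cons_succ, List.map_cons, List.prod_cons, Fin.val_zero,
      List.getElem_cons_succ]
    rw [Finset.mul_sum]
    congr 1
    · simp
      congr
    · apply Finset.sum_congr rfl
      intro l _
      simp [mul_ite]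

lemma wc_step1 (x d γ : Fin n → A)
    (hdd : ∀ i j, d i * d j = d j * d i)
    (hdx : ∀ i j, d i * x j - x j * d i = if i = j then 1 else 0)
    (hγx : ∀ i j, γ i * x j = x j * γ i)
    (hγd : ∀ i j, γ i * d j = d j * γ i)
    (P D : List (Fin n)) :
    (∑ k, γ k * d k) * ((P.map x).prod * (D.map d).prod)
      - ((P.map x).prod * (D.map d).prod) * (∑ k, γ k * d k)
    = ∑ l : Fin P.length, ((P.eraseIdx l).map x).prod * (γ (P.get l) * (D.map d).prod) := by
  set XP := (P.map x).prod with hXP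
  set DP := (D.map d).prod with hDP
  rw [Finset.sum_mul, Finset.mul_sum, ← Finset.sum_sub_distrib]
  have hA : ∀ k, γ k * d k * (XP * DP) - XP * DP * (γ k * d k)
      = γ k * ((d k * XP - XP * d k) * DP) := by
    intro k
    have e1 : γ k * DP = DP * γ k := wc_comm_prod d (γ k) (fun i => hγd k i) D
    have e2 : d k * DP = DP * d k := wc_comm_prod d (d k) (fun i => hdd k i) D
    have e3 : γ k * XP = XP * γ k := wc_comm_prod x (γ k) (fun i => hγx k i) P
    have h1 : XP * DP * (γ k * d k) = γ k * (XP * (d k * DP)) := by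
      rw [mul_assoc XP DP, ← mul_assoc DP, ← e1, mul_assoc (γ k) DP, ← e2,
        ← mul_assoc XP, ← mul_assoc XP, ← e3, mul_assoc (γ k), mul_assoc XP]
    rw [h1, sub_mul, mul_sub]
    simp only [mul_assoc]
  calc (∑ k, (γ k * d k * (XP * DP) - XP * DP * (γ k * d k)))
      = ∑ k, γ k * ((∑ l : Fin P.length,
          if k = P.get l then ((P.eraseIdx l).map x).prod else 0) * DP) := by
        refine Finset.sum_congr rfl fun k _ => ?_
        rw [hA k, wc_dcomm x d hdx k P]
    _ = ∑ k, ∑ l : Fin P.length,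
          (if k = P.get l then γ k * (((P.eraseIdx l).map x).prod * DP) else 0) := by
        refine Finset.sum_congr rfl fun k _ => ?_
        rw [Finset.sum_mul, Finset.mul_sum]
        refine Finset.sum_congr rfl fun l _ => ?_
        split <;> simp [mul_assoc]
    _ = ∑ l : Fin P.length, ∑ k,
          (if k = P.get l then γ k * (((P.eraseIdx l).map x).prod * DP) else 0) :=
        Finset.sum_comm
    _ = ∑ l : Fin P.length, γ (P.get l) * (((P.eraseIdx l).map x).prod * DP) := by
        refine Finset.sum_congr rfl fun l _ => ?_
        rw [Finset.sum_ite_eq' Finset.univ (P.get l)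
          (fun k => γ k * (((P.eraseIdx l).map x).prod * DP))]
        simp
    _ = ∑ l : Fin P.length, ((P.eraseIdx l).map x).prod * (γ (P.get l) * DP) := by
        refine Finset.sum_congr rfl fun l _ => ?_
        rw [← mul_assoc, wc_comm_prod x (γ (P.get l)) (fun i => hγx _ i) (P.eraseIdx l),
          mul_assoc]

lemma wc_step1s (x d γ : Fin n → A)
    (hdd : ∀ i j, d i * d j = d j * d i)
    (hdx : ∀ i j, d i * x j - x j * d i = if i = j then 1 else 0)
    (hγx : ∀ i j, γ i * x j = x j * γ i)
    (hγd : ∀ i j, γ i * d j = d j * γ i)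
    (P D : List (Fin n)) (s : ℕ) (hP : P.length = s) :
    (∑ k, γ k * d k) * ((P.map x).prod * (D.map d).prod)
      - ((P.map x).prod * (D.map d).prod) * (∑ k, γ k * d k)
    = ∑ l : Fin s, ((P.eraseIdx (l : ℕ)).map x).prod
        * (γ (P[(l : ℕ)]'(by omega)) * (D.map d).prod) := by
  subst hP
  rw [wc_step1 x d γ hdd hdx hγx hγd P D]
  simp only [List.get_eq_getElem]

end wcAux

lemma wc_comm_smul_smul {A : Type*} [Ring A] [Algebra ℂ A] (c co : ℂ) (Y W : A) :
    (c • Y) * (co • W) - (co • W) * (c • Y) = c • (co • (Y * W - W * Y)) := by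
  rw [smul_mul_assoc, mul_smul_comm, smul_mul_assoc, mul_smul_comm, smul_smul, smul_smul,
    mul_comm co c, ← smul_smul, ← smul_smul, ← smul_sub, ← smul_sub]

lemma wc_getXL {m k : ℕ} (f : Fin m → Fin k) (w s p : ℕ) (hp : p < s) (h2 : w + s ≤ m) :
    ((((List.finRange m).map f).drop w).take s)[p]'(by simp; omega) = f ⟨w + p, by omega⟩ := by
  simp [List.getElem_take, List.getElem_drop, List.getElem_map, List.getElem_finRange, Fin.cast]

lemma wc_lenXL {m k : ℕ} (f : Fin m → Fin k) (w s : ℕ) (h2 : w + s ≤ m) :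
    ((((List.finRange m).map f).drop w).take s).length = s := by
  simp; omega

lemma wc_take_one_drop {m k : ℕ} (f : Fin m → Fin k) (w : ℕ) (hw : w < m) :
    (((List.finRange m).map f).drop w).take 1 = [f ⟨w, hw⟩] := by
  rw [List.drop_eq_getElem_cons (by simp [hw])]
  simp [List.getElem_map, List.getElem_finRange, Fin.cast]

lemma wc_map_finRange_take_eq {k m : ℕ} (f g : Fin m → Fin k) (w : ℕ)
    (h : ∀ p : Fin m, (p : ℕ) < w → f p = g p) :
    ((List.finRange m).map f).take w = ((List.finRange m).map g).take w := by
  apply List.ext_getElem (by simp)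
  intro i h1 h2
  simp only [List.getElem_take, List.getElem_map, List.getElem_finRange]
  apply h
  simp only [List.length_take, List.length_map, List.length_finRange, lt_min_iff] at h1
  simpa using h1.1

lemma wc_map_finRange_drop_eq {k m : ℕ} (f g : Fin m → Fin k) (w : ℕ)
    (h : ∀ p : Fin m, w ≤ (p : ℕ) → f p = g p) :
    ((List.finRange m).map f).drop w = ((List.finRange m).map g).drop w := by
  apply List.ext_getElem (by simp)
  intro i h1 h2
  simp only [List.getElem_drop, List.getElem_map, List.getElem_finRange]
  apply h
  simp

lemma wc_key_list {α : Type*} (P Q : List α) (s l : ℕ) (hP : P.length = s) (hQ : Q.length = s)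
    (hl : l < s - 1)
    (h1 : ∀ j (hj : j < s), j ≠ l → j ≠ s-1 → P[j]'(by omega) = Q[j]'(by omega))
    (h2 : P[s-1]'(by omega) = Q[l]'(by omega)) :
    P.eraseIdx l = (Q.take (s-1)).eraseIdx l ++ [Q[l]'(by omega)] := by
  have ltk : (Q.take (s-1)).length = s - 1 := by rw [List.length_take]; omega
  have lek : ((Q.take (s-1)).eraseIdx l).length = s - 2 := by
    rw [List.length_eraseIdx, if_pos (by omega), ltk]; omega
  have lej : (P.eraseIdx l).length = s - 1 := by
    rw [List.length_eraseIdx, if_pos (by omega), hP]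
  apply List.ext_getElem
  · rw [lej, List.length_append, lek]; simp; omega
  intro j hA hB
  have hj : j < s - 1 := by rw [lej] at hA; exact hA
  rw [List.getElem_eraseIdx, List.getElem_append]
  by_cases hc : j < s - 2
  · rw [dif_pos (show j < ((Q.take (s-1)).eraseIdx l).length by rw [lek]; omega),
      List.getElem_eraseIdx]
    by_cases hjl : j < l
    · rw [dif_pos hjl, dif_pos hjl, List.getElem_take]
      exact h1 j (by omega) (by omega) (by omega)
    · rw [dif_neg hjl, dif_neg hjl, List.getElem_take]
      exact h1 (j+1) (by omega) (by omega) (by omega)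
  · have hje : j = s - 2 := by omega
    rw [dif_neg (show ¬ j < l by omega),
      dif_neg (show ¬ j < ((Q.take (s-1)).eraseIdx l).length by rw [lek]; omega)]
    rw [List.getElem_singleton]
    subst hje
    have e : P[s-2+1]'(by omega) = P[s-1]'(by omega) := by congr 1; omega
    rw [e, h2]

lemma wc_xpart {A : Type*} [Ring A] {n : ℕ} (x : Fin n → A)
    (hxx : ∀ i j, x i * x j = x j * x i)
    {m a s : ℕ} (hm : 2*a + s ≤ m) (l : ℕ) (hl : l < s) (J K : Fin m → Fin n)
    (u v : Fin m) (hu : (u : ℕ) = 2*a + l) (hv : (v : ℕ) = 2*a + (s-1))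
    (hJK : ∀ p, J p = K (Equiv.swap u v p)) :
    ((((((List.finRange m).map J).drop (2*a)).take s).eraseIdx l).map x).prod
      = (((((List.finRange m).map K).drop (2*a)).take (s-1)).map x).prod := by
  have hJe : J = fun p => K (Equiv.swap u v p) := funext hJK
  subst hJe
  have lenJ := wc_lenXL (fun p => K (Equiv.swap u v p)) (2*a) s hm
  have lenK := wc_lenXL K (2*a) s hm
  have htt : ((((List.finRange m).map K).drop (2*a)).take s).take (s-1)
      = (((List.finRange m).map K).drop (2*a)).take (s-1) := by
    rw [List.take_take]
    congr 1
    omega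
  rcases Nat.lt_or_ge l (s-1) with hls | hls
  · have key := wc_key_list
      ((((List.finRange m).map (fun p => K (Equiv.swap u v p))).drop (2*a)).take s)
      ((((List.finRange m).map K).drop (2*a)).take s) s l lenJ lenK hls
      (fun j hj hjl hjs => by
        rw [wc_getXL _ (2*a) s j hj hm, wc_getXL K (2*a) s j hj hm]
        rw [Equiv.swap_apply_of_ne_of_ne (Fin.ne_of_val_ne (by simp [hu]; omega))
          (Fin.ne_of_val_ne (by simp [hv]; omega))])
      (by
        rw [wc_getXL _ (2*a) s (s-1) (by omega) hm, wc_getXL K (2*a) s l hl hm]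
        have hveq : (⟨2*a + (s-1), by omega⟩ : Fin m) = v := Fin.ext (by simp [hv])
        rw [hveq, Equiv.swap_apply_right]
        congr 1
        exact Fin.ext (by simp [hu]))
    rw [key, List.map_append, List.prod_append]
    simp only [List.map_cons, List.map_nil, List.prod_cons, List.prod_nil, mul_one]
    have hget : ((((List.finRange m).map K).drop (2*a)).take s)[l]'(by omega)
        = (((((List.finRange m).map K).drop (2*a)).take s).take (s-1))[l]'(by
            rw [List.length_take]; omega) := by
      simp [List.getElem_take]
    rw [hget, wc_erase_prod x hxx _ l (by rw [List.length_take]; omega), htt]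
  · have hleq : l = s - 1 := by omega
    have huv : u = v := Fin.ext (by omega)
    have hJK2 : (fun p => K (Equiv.swap u v p)) = K := by
      funext p; rw [huv, Equiv.swap_self]; rfl
    have etake : ∀ (Q : List (Fin n)), Q.length = s → Q.eraseIdx (s-1) = Q.take (s-1) := by
      intro Q hQ
      rw [List.eraseIdx_eq_take_drop_succ, List.drop_eq_nil_of_le (by omega), List.append_nil]
    rw [hJK2, hleq, etake _ lenK, htt]

lemma wc_gamma_idx {k m a s : ℕ} (hm : 2*a + s ≤ m) (l : ℕ) (hl : l < s)
    (J K : Fin m → Fin k) (u v : Fin m)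
    (hu : (u : ℕ) = 2*a + l) (hv : (v : ℕ) = 2*a + (s-1))
    (hJK : ∀ p, J p = K (Equiv.swap u v p)) :
    ((((List.finRange m).map J).drop (2*a)).take s)[l]'(by
        rw [wc_lenXL J (2*a) s hm]; omega) = K v := by
  rw [wc_getXL J (2*a) s l hl hm, hJK]
  congr 1
  have hueq : (⟨2*a + l, by omega⟩ : Fin m) = u := Fin.ext (by simp [hu])
  rw [hueq, Equiv.swap_apply_left]

lemma wc_per_sigma {A : Type*} [Ring A] [Algebra ℂ A] {n : ℕ} (x d γ : Fin n → A)
    (hdd : ∀ i j, d i * d j = d j * d i)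
    (hdx : ∀ i j, d i * x j - x j * d i = if i = j then 1 else 0)
    (hγx : ∀ i j, γ i * x j = x j * γ i)
    (hγd : ∀ i j, γ i * d j = d j * γ i)
    {m : ℕ} (a s t : ℕ) (hs2 : 2*a + s ≤ m) (f : Fin m → Fin n) (eh : ℂ) :
    (∑ k, γ k * d k) * (eh • (((((List.finRange m).map f).drop (2*a)).take s).map x).prod
        * (((((List.finRange m).map f).drop (2*a + s)).take t).map d).prod)
      - (eh • (((((List.finRange m).map f).drop (2*a)).take s).map x).prod
        * (((((List.finRange m).map f).drop (2*a + s)).take t).map d).prod) * (∑ k, γ k * d k)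
    = ∑ l : Fin s, eh •
        (((((((List.finRange m).map f).drop (2*a)).take s).eraseIdx (l : ℕ)).map x).prod
        * (γ (((((List.finRange m).map f).drop (2*a)).take s)[(l : ℕ)]'(by
            rw [wc_lenXL f (2*a) s hs2]; omega))
          * (((((List.finRange m).map f).drop (2*a + s)).take t).map d).prod)) := by
  rw [smul_mul_assoc, mul_smul_comm, smul_mul_assoc, ← smul_sub,
    wc_step1s x d γ hdd hdx hγx hγd _ _ s (wc_lenXL f (2*a) s hs2), Finset.smul_sum]

lemma wc_sum_reindex {A : Type*} [Ring A] [Algebra ℂ A] {n : ℕ} (x d γ : Fin n → A)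
    (η : Matrix (Fin n) (Fin n) ℂ)
    (hxx : ∀ i j, x i * x j = x j * x i)
    {m : ℕ} (a s t : ℕ) (hs : 0 < s) (hs2 : 2*a + s ≤ m) (idx : Fin m → Fin n) (l : Fin s) :
    ∑ σ : Equiv.Perm (Fin m),
      etaPairs η (((List.finRange m).map (fun p => idx (σ p))).take (2*a)) •
        (((((((List.finRange m).map (fun p => idx (σ p))).drop (2*a)).take s).eraseIdx
            ((l : ℕ))).map x).prod
          * (γ (((((List.finRange m).map (fun p => idx (σ p))).drop (2*a)).take s)[(l : ℕ)]'(by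
              rw [wc_lenXL (fun p => idx (σ p)) (2*a) s hs2]; omega))
            * (((((List.finRange m).map (fun p => idx (σ p))).drop (2*a + s)).take t).map
                d).prod))
    = ∑ σ : Equiv.Perm (Fin m),
      etaPairs η (((List.finRange m).map (fun p => idx (σ p))).take (2*a)) •
        (((((List.finRange m).map (fun p => idx (σ p))).drop (2*a)).take (s-1)).map x).prod *
        (((((List.finRange m).map (fun p => idx (σ p))).drop (2*a + (s-1))).take 1).map γ).prod *
        (((((List.finRange m).map (fun p => idx (σ p))).drop
            (2*a + (s-1) + 1)).take t).map d).prod := by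
  set u : Fin m := ⟨2*a + (l : ℕ), by omega⟩ with hu
  set v : Fin m := ⟨2*a + (s-1), by omega⟩ with hv
  have huv : (u : ℕ) = 2*a + (l : ℕ) := by rw [hu]
  have hvv : (v : ℕ) = 2*a + (s-1) := by rw [hv]
  refine Eq.trans (Equiv.sum_comp (Equiv.mulRight (Equiv.swap u v)) _).symm
    (Finset.sum_congr rfl fun σ _ => ?_)
  simp only [Equiv.coe_mulRight, Equiv.Perm.mul_apply]
  have e1 := wc_map_finRange_take_eq (fun p => idx (σ (Equiv.swap u v p)))
    (fun p => idx (σ p)) (2*a) (fun p hp => by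
      show idx (σ (Equiv.swap u v p)) = idx (σ p)
      rw [Equiv.swap_apply_of_ne_of_ne (Fin.ne_of_val_ne (by simp [huv]; omega))
        (Fin.ne_of_val_ne (by simp [hvv]; omega))])
  have e2 := wc_map_finRange_drop_eq (fun p => idx (σ (Equiv.swap u v p)))
    (fun p => idx (σ p)) (2*a + s) (fun p hp => by
      show idx (σ (Equiv.swap u v p)) = idx (σ p)
      rw [Equiv.swap_apply_of_ne_of_ne (Fin.ne_of_val_ne (by simp [huv]; omega))
        (Fin.ne_of_val_ne (by simp [hvv]; omega))])
  have e2t : ((((List.finRange m).map (fun p => idx (σ (Equiv.swap u v p)))).drop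
        (2*a + s)).take t)
      = ((((List.finRange m).map (fun p => idx (σ p))).drop (2*a + (s-1) + 1)).take t) := by
    have harith : 2*a + (s-1) + 1 = 2*a + s := by omega
    rw [harith, e2]
  have e3 := wc_xpart x hxx hs2 (l : ℕ) l.isLt (fun p => idx (σ (Equiv.swap u v p)))
    (fun p => idx (σ p)) u v huv hvv (fun p => rfl)
  have e4 := wc_gamma_idx hs2 (l : ℕ) l.isLt (fun p => idx (σ (Equiv.swap u v p)))
    (fun p => idx (σ p)) u v huv hvv (fun p => rfl)
  have e5 : ((((List.finRange m).map (fun p => idx (σ p))).drop (2*a + (s-1))).take 1)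
      = [(fun p => idx (σ p)) v] := wc_take_one_drop (fun p => idx (σ p)) (2*a + (s-1)) (by omega)
  rw [e1, e3, e4, e2t, e5]
  simp only [List.map_cons, List.map_nil, List.prod_cons, List.prod_nil, mul_one,
    smul_mul_assoc, mul_assoc]



/-- with `X = (i/√2) γ^k ∂_k` and `2a+s+t = m`,
`ad(X)([η^a x^s ∂^t; i_1,…,i_m]) = (i/√2)·[η^a x^{s-1} γ ∂^t; i_1,…,i_m]`
(the bracket with an `x`-exponent `< 0` being zero by convention; since
`[η^a x^s ∂^t]` is even, `ad(X)` is the ordinary commutator with `X`). -/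
theorem wcBracket_adX_no_gamma
    {A : Type*} [Ring A] [Algebra ℂ A] {n : ℕ}
    (x d γ : Fin n → A) (η : Matrix (Fin n) (Fin n) ℂ)
    (hsym : ∀ i j, η i j = η j i)
    (hxx : ∀ i j, x i * x j = x j * x i)
    (hdd : ∀ i j, d i * d j = d j * d i)
    (hdx : ∀ i j, d i * x j - x j * d i = if i = j then 1 else 0)
    (hγx : ∀ i j, γ i * x j = x j * γ i)
    (hγd : ∀ i j, γ i * d j = d j * γ i)
    (hγγ : ∀ i j, γ i * γ j + γ j * γ i = (2 * η i j) • (1 : A))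
    (m a s t : ℕ) (hlen : 2 * a + s + t = m) (idx : Fin m → Fin n) :
    ((Complex.I / (Real.sqrt 2 : ℂ)) • ∑ k, γ k * d k) * wcBracket x d γ η m a s 0 t idx
      - wcBracket x d γ η m a s 0 t idx * ((Complex.I / (Real.sqrt 2 : ℂ)) • ∑ k, γ k * d k)
      = if s = 0 then 0
        else (Complex.I / (Real.sqrt 2 : ℂ)) • wcBracket x d γ η m a (s - 1) 1 t idx := by
  have hs2 : 2*a + s ≤ m := by omega
  simp only [wcBracket, List.take_zero, List.map_nil, List.prod_nil, mul_one, add_zero]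
  rw [wc_comm_smul_smul, Finset.mul_sum, Finset.sum_mul, ← Finset.sum_sub_distrib]
  simp only [wc_per_sigma x d γ hdd hdx hγx hγd a s t hs2]
  rw [Finset.sum_comm]
  rcases Nat.eq_zero_or_pos s with hs0 | hs0
  · subst hs0
    simp
  · rw [if_neg (by omega)]
    rw [Finset.sum_congr rfl (fun l _ => wc_sum_reindex x d γ η hxx a s t hs0 hs2 idx l)]
    rw [Finset.sum_const, Finset.card_univ, Fintype.card_fin]
    congr 1
    rw [← Nat.cast_smul_eq_nsmul ℂ, smul_smul]
    congr 1
    have hfac : (s.factorial : ℂ) = (s : ℂ) * ((s-1).factorial : ℂ) := by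
      exact_mod_cast congrArg (Nat.cast : ℕ → ℂ) (Nat.mul_factorial_pred hs0.ne').symm
    have h2 : (2:ℂ)^a ≠ 0 := pow_ne_zero _ two_ne_zero
    have ha : ((a.factorial : ℂ)) ≠ 0 := Nat.cast_ne_zero.mpr (Nat.factorial_ne_zero a)
    have hsf : (((s-1).factorial : ℂ)) ≠ 0 := Nat.cast_ne_zero.mpr (Nat.factorial_ne_zero _)
    have ht : ((t.factorial : ℂ)) ≠ 0 := Nat.cast_ne_zero.mpr (Nat.factorial_ne_zero t)
    have hsne : (s:ℂ) ≠ 0 := Nat.cast_ne_zero.mpr (by omega)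
    rw [hfac]
    field_simp
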